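/- For all complex numbers x, y with |x| < 1 and |y| < 1, one has ((Σ_{j∈ℤ} (−1)ʲ x^{j²}) + (Σ_{k∈ℤ} (−1)ᵏ y^{k²}))/2 = Σ_{(j,k)} (−1)ʲ (x^{j²} − x^{(j+1)²})·(y^{k²} − y^{(k+1)²}), where the right-hand sum runs over all pairs of nonnegative integers (j,k) with j ≡ k (mod 2), and all series converge absolutely. -/

import Mathlib

section aux

private lemma sq_norm_summable {x : ℂ} (hx : ‖x‖ < 1) :
    Summable fun n : ℕ => ‖x‖ ^ (n ^ 2) := by
  refine Summable.of_nonneg_of_le (fun n => by positivity) (fun n => ?_)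
    (summable_geometric_of_lt_one (norm_nonneg x) hx)
  exact pow_le_pow_of_le_one (norm_nonneg x) hx.le (Nat.le_self_pow two_ne_zero n)

private lemma g_summable {x : ℂ} (hx : ‖x‖ < 1) :
    Summable fun n : ℕ => (-1 : ℂ) ^ n * x ^ (n ^ 2) := by
  refine Summable.of_norm_bounded (sq_norm_summable hx) (fun n => ?_)
  simp [norm_pow]

private lemma diff_norm_summable {x : ℂ} (hx : ‖x‖ < 1) :
    Summable fun n : ℕ => ‖x ^ (n ^ 2) - x ^ ((n + 1) ^ 2)‖ := by
  refine Summable.of_nonneg_of_le (fun n => norm_nonneg _) (fun n => ?_)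
    ((sq_norm_summable hx).add ((summable_nat_add_iff (f := fun n : ℕ => ‖x‖ ^ (n ^ 2)) 1).mpr (sq_norm_summable hx)))
  calc ‖x ^ (n ^ 2) - x ^ ((n + 1) ^ 2)‖ ≤ ‖x ^ (n ^ 2)‖ + ‖x ^ ((n + 1) ^ 2)‖ :=
        norm_sub_le _ _
    _ = ‖x‖ ^ (n ^ 2) + ‖x‖ ^ ((n + 1) ^ 2) := by simp [norm_pow]

private lemma sdiff_norm_summable {x : ℂ} (hx : ‖x‖ < 1) :
    Summable fun n : ℕ => ‖(-1 : ℂ) ^ n * (x ^ (n ^ 2) - x ^ ((n + 1) ^ 2))‖ := by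
  refine (diff_norm_summable hx).congr fun n => ?_
  simp [norm_mul]

/-- telescoping -/
private lemma tele {x : ℂ} (hx : ‖x‖ < 1) :
    ∑' n : ℕ, (x ^ (n ^ 2) - x ^ ((n + 1) ^ 2)) = 1 := by
  have ht : Summable fun n : ℕ => x ^ (n ^ 2) := by
    refine Summable.of_norm_bounded (sq_norm_summable hx) (fun n => ?_)
    simp [norm_pow]
  have ht' : Summable fun n : ℕ => x ^ ((n + 1) ^ 2) :=
    (summable_nat_add_iff (f := fun n : ℕ => x ^ (n ^ 2)) 1).mpr ht
  rw [Summable.tsum_sub ht ht', Summable.tsum_eq_zero_add ht]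
  simp

/-- ℤ-sum equals sum of the telescoped signed family. -/
private lemma int_sum {x : ℂ} (hx : ‖x‖ < 1) :
    HasSum (fun j : ℤ => (-1 : ℂ) ^ j * x ^ (j ^ 2))
      (∑' n : ℕ, (-1 : ℂ) ^ n * (x ^ (n ^ 2) - x ^ ((n + 1) ^ 2))) := by
  have hg := g_summable hx
  have hg' : Summable fun n : ℕ => (-1 : ℂ) ^ (n + 1) * x ^ ((n + 1) ^ 2) :=
    (summable_nat_add_iff (f := fun n : ℕ => (-1 : ℂ) ^ n * x ^ (n ^ 2)) 1).mpr hg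
  have key : (∑' n : ℕ, (-1 : ℂ) ^ n * (x ^ (n ^ 2) - x ^ ((n + 1) ^ 2)))
      = (∑' n : ℕ, (-1 : ℂ) ^ n * x ^ (n ^ 2))
        + ∑' n : ℕ, (-1 : ℂ) ^ (n + 1) * x ^ ((n + 1) ^ 2) := by
    rw [← Summable.tsum_add hg hg']
    refine tsum_congr fun n => ?_
    ring
  rw [key]
  have h1 : ∀ n : ℕ, (-1 : ℂ) ^ ((n : ℤ)) * x ^ (((n : ℤ)) ^ 2)
      = (-1 : ℂ) ^ n * x ^ (n ^ 2) := by
    intro n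
    rw [show ((n : ℤ)) ^ 2 = ((n ^ 2 : ℕ) : ℤ) by push_cast; ring,
      zpow_natCast, zpow_natCast]
  have h2 : ∀ n : ℕ, (-1 : ℂ) ^ (-((n : ℤ) + 1)) * x ^ ((-((n : ℤ) + 1)) ^ 2)
      = (-1 : ℂ) ^ (n + 1) * x ^ ((n + 1) ^ 2) := by
    intro n
    have e1 : (-((n : ℤ) + 1)) ^ 2 = (((n + 1) ^ 2 : ℕ) : ℤ) := by push_cast; ring
    have e2 : (-1 : ℂ) ^ (-((n : ℤ) + 1)) = (-1 : ℂ) ^ (n + 1) := by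
      rw [zpow_neg, show ((n : ℤ) + 1) = (((n + 1 : ℕ)) : ℤ) by push_cast; ring,
        zpow_natCast, ← inv_pow, inv_neg, inv_one]
    rw [e1, e2, zpow_natCast]
  refine HasSum.of_nat_of_neg_add_one ?_ ?_
  · have e : (fun n : ℕ => (-1 : ℂ) ^ ((n : ℤ)) * x ^ (((n : ℤ)) ^ 2))
        = fun n : ℕ => (-1 : ℂ) ^ n * x ^ (n ^ 2) := funext h1
    exact e ▸ hg.hasSum
  · have e : (fun n : ℕ => (-1 : ℂ) ^ (-((n : ℤ) + 1)) * x ^ ((-((n : ℤ) + 1)) ^ 2))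
        = fun n : ℕ => (-1 : ℂ) ^ (n + 1) * x ^ ((n + 1) ^ 2) := funext h2
    exact e ▸ hg'.hasSum

private lemma parity_term (j k : ℕ) (a b : ℂ) :
    (if j % 2 = k % 2 then (-1 : ℂ) ^ j * (a * b) else 0)
      = ((-1 : ℂ) ^ j * a * b + a * ((-1 : ℂ) ^ k * b)) / 2 := by
  rw [neg_one_pow_eq_pow_mod_two (n := j), neg_one_pow_eq_pow_mod_two (n := k)]
  rcases Nat.mod_two_eq_zero_or_one j with hj | hj <;>
    rcases Nat.mod_two_eq_zero_or_one k with hk | hk <;>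
      simp [hj, hk]

end aux

/-- Decomposition of the twisted torus partition function of the loop-normalized
factorizing defect line at irrational points of the free boson orbifold branch. -/
theorem stmt_9 (x y : ℂ) (hx : ‖x‖ < 1) (hy : ‖y‖ < 1) :
    (Summable fun j : ℤ => (-1 : ℂ) ^ j * x ^ (j ^ 2)) ∧
    (Summable fun k : ℤ => (-1 : ℂ) ^ k * y ^ (k ^ 2)) ∧
    (Summable fun p : ℕ × ℕ =>
      if p.1 % 2 = p.2 % 2 then
        (-1 : ℂ) ^ p.1 *
          ((x ^ (p.1 ^ 2) - x ^ ((p.1 + 1) ^ 2)) * (y ^ (p.2 ^ 2) - y ^ ((p.2 + 1) ^ 2)))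
      else 0) ∧
    ((∑' j : ℤ, (-1 : ℂ) ^ j * x ^ (j ^ 2)) + (∑' k : ℤ, (-1 : ℂ) ^ k * y ^ (k ^ 2))) / 2
      = ∑' p : ℕ × ℕ,
          if p.1 % 2 = p.2 % 2 then
            (-1 : ℂ) ^ p.1 *
              ((x ^ (p.1 ^ 2) - x ^ ((p.1 + 1) ^ 2)) * (y ^ (p.2 ^ 2) - y ^ ((p.2 + 1) ^ 2)))
          else 0 := by
  -- the four summable building blocks over ℕ
  set u : ℕ → ℂ := fun n => (-1 : ℂ) ^ n * (x ^ (n ^ 2) - x ^ ((n + 1) ^ 2)) with hu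
  set u' : ℕ → ℂ := fun n => x ^ (n ^ 2) - x ^ ((n + 1) ^ 2) with hu'
  set v : ℕ → ℂ := fun n => y ^ (n ^ 2) - y ^ ((n + 1) ^ 2) with hv
  set v' : ℕ → ℂ := fun n => (-1 : ℂ) ^ n * (y ^ (n ^ 2) - y ^ ((n + 1) ^ 2)) with hv'
  have hun : Summable fun n => ‖u n‖ := sdiff_norm_summable hx
  have hu'n : Summable fun n => ‖u' n‖ := diff_norm_summable hx
  have hvn : Summable fun n => ‖v n‖ := diff_norm_summable hy
  have hv'n : Summable fun n => ‖v' n‖ := sdiff_norm_summable hy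
  -- product summabilities
  have hP : Summable fun p : ℕ × ℕ => u p.1 * v p.2 := summable_mul_of_summable_norm hun hvn
  have hQ : Summable fun p : ℕ × ℕ => u' p.1 * v' p.2 := summable_mul_of_summable_norm hu'n hv'n
  -- the ℤ-sums
  have hAx := int_sum hx
  have hAy := int_sum hy
  -- pointwise identity for the ℕ × ℕ family
  have hpt : ∀ p : ℕ × ℕ,
      (if p.1 % 2 = p.2 % 2 then
        (-1 : ℂ) ^ p.1 *
          ((x ^ (p.1 ^ 2) - x ^ ((p.1 + 1) ^ 2)) * (y ^ (p.2 ^ 2) - y ^ ((p.2 + 1) ^ 2)))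
      else 0) = (u p.1 * v p.2 + u' p.1 * v' p.2) / 2 := by
    intro p
    have := parity_term p.1 p.2 (x ^ (p.1 ^ 2) - x ^ ((p.1 + 1) ^ 2))
      (y ^ (p.2 ^ 2) - y ^ ((p.2 + 1) ^ 2))
    rw [this]
  have hF : Summable fun p : ℕ × ℕ =>
      if p.1 % 2 = p.2 % 2 then
        (-1 : ℂ) ^ p.1 *
          ((x ^ (p.1 ^ 2) - x ^ ((p.1 + 1) ^ 2)) * (y ^ (p.2 ^ 2) - y ^ ((p.2 + 1) ^ 2)))
      else 0 := by
    refine Summable.congr ?_ fun p => (hpt p).symm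
    exact (hP.add hQ).div_const 2
  refine ⟨hAx.summable, hAy.summable, hF, ?_⟩
  -- compute both sides
  rw [hAx.tsum_eq, hAy.tsum_eq]
  calc ((∑' n, u n) + ∑' n, v' n) / 2
      = ((∑' n, u n) * (∑' n, v n) + (∑' n, u' n) * (∑' n, v' n)) / 2 := by
        rw [show (∑' n, v n) = 1 from tele hy, show (∑' n, u' n) = 1 from tele hx]
        ring
    _ = ((∑' p : ℕ × ℕ, u p.1 * v p.2) + ∑' p : ℕ × ℕ, u' p.1 * v' p.2) / 2 := by
        rw [tsum_mul_tsum_of_summable_norm hun hvn, tsum_mul_tsum_of_summable_norm hu'n hv'n]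
    _ = ∑' p : ℕ × ℕ, (u p.1 * v p.2 + u' p.1 * v' p.2) / 2 := by
        rw [← Summable.tsum_add hP hQ, tsum_div_const]
    _ = _ := (tsum_congr fun p => (hpt p).symm)
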